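/- Double-negation stability of the intuitionistic translation: let A be a classical formula. Then ⊢_(i) ¬¬A^i → A^i, where ^i is the translation carrying each classical variable X_c to ¬¬i(X_c) for an injection i of 𝒱_c into a countable subset 𝒱'_i of 𝒱_i, fixing minimal and intuitionistic variables and ⊥, commuting with ∧ and →, and sending A ∨ B to ¬¬(A^i ∨ B^i). -/

import Mathlib

namespace PML

/-- The three kinds of propositional variables: minimal, intuitionistic, classical. -/
inductive Kind : Type
  | m | i | c
deriving DecidableEq

/-- Formulas of propositional mixed logic (PML). -/
inductive Formula : Type
  | var : Kind → ℕ → Formula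
  | bot : Formula
  | and : Formula → Formula → Formula
  | or : Formula → Formula → Formula
  | imp : Formula → Formula → Formula
deriving DecidableEq

namespace Formula

/-- ¬A abbreviates A → ⊥. -/
def neg (A : Formula) : Formula := imp A bot

/-- All variables occurring in the formula have a kind satisfying `p`. -/
def onlyKinds (p : Kind → Prop) : Formula → Prop
  | var k _ => p k
  | bot => True
  | and A B => onlyKinds p A ∧ onlyKinds p B
  | or A B => onlyKinds p A ∧ onlyKinds p B
  | imp A B => onlyKinds p A ∧ onlyKinds p B

/-- A classical formula: only classical variables. -/
def IsClassical (A : Formula) : Prop := onlyKinds (fun k => k = Kind.c) A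

/-- An intuitionistic formula: only intuitionistic and classical variables. -/
def IsIntuitionistic (A : Formula) : Prop := onlyKinds (fun k => k = Kind.i ∨ k = Kind.c) A

/-- A formula without classical variables. -/
def NoClassicalVar (A : Formula) : Prop := onlyKinds (fun k => k ≠ Kind.c) A

/-- A formula without classical and without intuitionistic variables. -/
def OnlyMinimalVar (A : Formula) : Prop := onlyKinds (fun k => k = Kind.m) A

/-- A formula without intuitionistic variables. -/
def NoIntuitVar (A : Formula) : Prop := onlyKinds (fun k => k ≠ Kind.i) A

/-- Substitution of the formula `F` for every occurrence of the variable of kind `k`, index `n`. -/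
def subst (F : Formula) (k : Kind) (n : ℕ) : Formula → Formula
  | var k' n' => if k' = k ∧ n' = n then F else var k' n'
  | bot => bot
  | and A B => and (subst F k n A) (subst F k n B)
  | or A B => or (subst F k n A) (subst F k n B)
  | imp A B => imp (subst F k n A) (subst F k n B)

end Formula

/-- Which optional rules are available: the intuitionistic absurdity rule (⊥_i),
the classical absurdity rule (⊥_c), and whether (∨_E) is unrestricted
(`fullOrE = false` gives the PML^∨ restriction). -/
structure Rules where
  botI : Bool
  botC : Bool
  fullOrE : Bool

/-- Natural deduction for mixed logic, parametrized by the available rules. -/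
inductive Deriv (R : Rules) : Set Formula → Formula → Prop
  | ax (A : Formula) : Deriv R {A} A
  | weak {Γ : Set Formula} {A : Formula} (B : Formula) : Deriv R Γ A → Deriv R (insert B Γ) A
  | andI {Γ₁ Γ₂ : Set Formula} {A₁ A₂ : Formula} :
      Deriv R Γ₁ A₁ → Deriv R Γ₂ A₂ → Deriv R (Γ₁ ∪ Γ₂) (A₁.and A₂)
  | andE₁ {Γ : Set Formula} {A₁ A₂ : Formula} : Deriv R Γ (A₁.and A₂) → Deriv R Γ A₁
  | andE₂ {Γ : Set Formula} {A₁ A₂ : Formula} : Deriv R Γ (A₁.and A₂) → Deriv R Γ A₂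
  | orI₁ {Γ : Set Formula} {A₁ : Formula} (A₂ : Formula) : Deriv R Γ A₁ → Deriv R Γ (A₁.or A₂)
  | orI₂ {Γ : Set Formula} {A₂ : Formula} (A₁ : Formula) : Deriv R Γ A₂ → Deriv R Γ (A₁.or A₂)
  | orE {Γ₁ Γ₂ Γ₃ : Set Formula} {A₁ A₂ B : Formula} :
      (R.fullOrE = true ∨ ((A₁.or A₂).IsClassical → B.IsClassical)) →
      Deriv R Γ₁ (A₁.or A₂) → Deriv R (insert A₁ Γ₂) B → Deriv R (insert A₂ Γ₃) B →
      Deriv R (Γ₁ ∪ Γ₂ ∪ Γ₃) B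
  | impI {Γ : Set Formula} {A₁ A₂ : Formula} : Deriv R (insert A₁ Γ) A₂ → Deriv R Γ (A₁.imp A₂)
  | impE {Γ₁ Γ₂ : Set Formula} {A₁ A₂ : Formula} :
      Deriv R Γ₁ (A₁.imp A₂) → Deriv R Γ₂ A₁ → Deriv R (Γ₁ ∪ Γ₂) A₂
  | botI {Γ : Set Formula} {A : Formula} :
      R.botI = true → A.IsIntuitionistic → Deriv R Γ Formula.bot → Deriv R Γ A
  | botC {Γ : Set Formula} {A : Formula} :
      R.botC = true → A.IsClassical → Deriv R Γ (A.neg.neg) → Deriv R Γ A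

/-- Γ ⊢_pml A : full mixed logic. -/
def DerivPML : Set Formula → Formula → Prop := Deriv ⟨true, true, true⟩

/-- Γ ⊢_(i) A : derivable without the rule (⊥_c). -/
def DerivI : Set Formula → Formula → Prop := Deriv ⟨true, false, true⟩

/-- Γ ⊢_(m) A : derivable without the rules (⊥_i) and (⊥_c). -/
def DerivM : Set Formula → Formula → Prop := Deriv ⟨false, false, true⟩

/-- Γ ⊢_(i') A : derivable without the rule (⊥_i). -/
def DerivI' : Set Formula → Formula → Prop := Deriv ⟨false, true, true⟩

/-- Γ ⊢^∨ A : derivable in PML^∨ (restricted ∨-elimination). -/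
def DerivVee : Set Formula → Formula → Prop := Deriv ⟨true, true, false⟩

/-- A Kripke frame over a poset `W`: a monotone forcing relation on atoms. -/
structure KripkeFrame (W : Type) [PartialOrder W] where
  fvar : W → Kind → ℕ → Prop
  fbot : W → Prop
  mono_var : ∀ {a b : W} (k : Kind) (n : ℕ), a ≤ b → fvar a k n → fvar b k n
  mono_bot : ∀ {a b : W}, a ≤ b → fbot a → fbot b

variable {W : Type} [PartialOrder W]

/-- Forcing, extended to compound formulas. -/
def KripkeFrame.force (M : KripkeFrame W) : W → Formula → Prop
  | a, .var k n => M.fvar a k n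
  | a, .bot => M.fbot a
  | a, .and A B => M.force a A ∧ M.force a B
  | a, .or A B => M.force a A ∨ M.force a B
  | a, .imp A B => ∀ b : W, a ≤ b → M.force b A → M.force b B

/-- A formula is valid in a model iff it is forced at every node. -/
def KripkeFrame.Valid (M : KripkeFrame W) (A : Formula) : Prop := ∀ a : W, M.force a A

/-- A mixed Kripke model: (2) a node forcing ⊥ forces every intuitionistic or classical
variable; (3) a classical variable forced at a node not forcing ⊥ is forced everywhere. -/
def IsMixed (M : KripkeFrame W) : Prop :=
  (∀ (a : W) (k : Kind) (n : ℕ), M.fbot a → (k = Kind.i ∨ k = Kind.c) → M.fvar a k n) ∧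
  (∀ (a : W) (n : ℕ), M.fvar a Kind.c n → ¬ M.fbot a → ∀ b : W, M.fvar b Kind.c n)

/-- An intuitionistic mixed Kripke model: restricted to atoms in 𝒱_m ∪ 𝒱_i ∪ {⊥}
(no classical atom is forced) and a node forcing ⊥ forces every intuitionistic variable. -/
def IsIntMixed (M : KripkeFrame W) : Prop :=
  (∀ (a : W) (n : ℕ), ¬ M.fvar a Kind.c n) ∧
  (∀ (a : W) (n : ℕ), M.fbot a → M.fvar a Kind.i n)

/-- A minimal mixed Kripke model: restricted to atoms in 𝒱_m ∪ {⊥}. -/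
def IsMinMixed (M : KripkeFrame W) : Prop :=
  (∀ (a : W) (n : ℕ), ¬ M.fvar a Kind.i n) ∧ (∀ (a : W) (n : ℕ), ¬ M.fvar a Kind.c n)

/-- Semantic entailment: every mixed Kripke model validating all of Γ validates A. -/
def Entails (Γ : Set Formula) (A : Formula) : Prop :=
  ∀ (W : Type) [PartialOrder W] [Nonempty W] (M : KripkeFrame W),
    IsMixed M → (∀ B ∈ Γ, M.Valid B) → M.Valid A

/-- A saturated set of formulas. -/
def Saturated (Δ : Set Formula) : Prop :=
  ∀ C D : Formula, DerivPML Δ (C.or D) → C ∈ Δ ∨ D ∈ Δ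

/-- The restriction 𝒦_(i) of a model to atoms in 𝒱_m ∪ 𝒱_i ∪ {⊥}. -/
def KripkeFrame.restrictI (M : KripkeFrame W) : KripkeFrame W where
  fvar a k n := k ≠ Kind.c ∧ M.fvar a k n
  fbot := M.fbot
  mono_var := by
    intro a b k n hab h
    exact ⟨h.1, M.mono_var k n hab h.2⟩
  mono_bot := fun hab h => M.mono_bot hab h

/-- The restriction 𝒦_(m) of a model to atoms in 𝒱_m ∪ {⊥}. -/
def KripkeFrame.restrictM (M : KripkeFrame W) : KripkeFrame W where
  fvar a k n := k = Kind.m ∧ M.fvar a k n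
  fbot := M.fbot
  mono_var := by
    intro a b k n hab h
    exact ⟨h.1, M.mono_var k n hab h.2⟩
  mono_bot := fun hab h => M.mono_bot hab h

/-- The translation ^m : intuitionistic variables X_i are sent to ¬¬ m(X_i). -/
def Formula.transM (m : ℕ → ℕ) : Formula → Formula
  | .var Kind.i n => ((Formula.var Kind.m (m n)).neg).neg
  | .var k n => .var k n
  | .bot => .bot
  | .and A B => .and (Formula.transM m A) (Formula.transM m B)
  | .or A B => .or (Formula.transM m A) (Formula.transM m B)
  | .imp A B => .imp (Formula.transM m A) (Formula.transM m B)

/-- The translation ^i : classical variables X_c are sent to ¬¬ i(X_c), and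
disjunctions are doubly negated. -/
def Formula.transI (f : ℕ → ℕ) : Formula → Formula
  | .var Kind.c n => ((Formula.var Kind.i (f n)).neg).neg
  | .var k n => .var k n
  | .bot => .bot
  | .and A B => .and (Formula.transI f A) (Formula.transI f B)
  | .or A B => (((Formula.transI f A).or (Formula.transI f B)).neg).neg
  | .imp A B => .imp (Formula.transI f A) (Formula.transI f B)

variable {R : Rules}

lemma Deriv.weak_fin {Γ Δ : Set Formula} {A : Formula} (h : Deriv R Γ A) (hΔ : Δ.Finite) :
    Deriv R (Γ ∪ Δ) A := by
  refine Set.Finite.induction_on (motive := fun s _ => Deriv R (Γ ∪ s) A) Δ hΔ (by simpa) ?_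
  intro a s _ _ ih
  rw [Set.union_insert]
  exact Deriv.weak _ ih

lemma Deriv.mono {Γ Γ' : Set Formula} {A : Formula} (h : Deriv R Γ A) (hs : Γ ⊆ Γ')
    (hfin : Γ'.Finite) : Deriv R Γ' A := by
  have := h.weak_fin hfin
  rwa [Set.union_eq_self_of_subset_left hs] at this

lemma Deriv.hyp {Γ : Set Formula} {A : Formula} (hA : A ∈ Γ) (hfin : Γ.Finite) :
    Deriv R Γ A :=
  (Deriv.ax A).mono (by simpa) hfin

lemma Deriv.mp {Γ : Set Formula} {A B : Formula} (h1 : Deriv R Γ (A.imp B))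
    (h2 : Deriv R Γ A) : Deriv R Γ B := by
  have := Deriv.impE h1 h2
  rwa [Set.union_self] at this

lemma Deriv.andI' {Γ : Set Formula} {A B : Formula} (h1 : Deriv R Γ A)
    (h2 : Deriv R Γ B) : Deriv R Γ (A.and B) := by
  have := Deriv.andI h1 h2
  rwa [Set.union_self] at this

/-- Triple negation elimination: ⊢ ¬¬¬P → ¬P. -/
lemma Deriv.tneg (P : Formula) : Deriv R ∅ ((P.neg.neg.neg).imp P.neg) := by
  apply Deriv.impI
  apply Deriv.impI
  refine Deriv.mp (Deriv.hyp (A := P.neg.neg.neg) (by simp) (Set.toFinite _)) ?_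
  apply Deriv.impI
  exact Deriv.mp (Deriv.hyp (A := P.neg) (by simp) (Set.toFinite _))
    (Deriv.hyp (A := P) (by simp) (Set.toFinite _))

/-- If ⊢ A → B then ¬¬A ⊢ ¬¬B (in any finite context). -/
lemma Deriv.dn_map {Γ : Set Formula} {A B : Formula} (hAB : Deriv R ∅ (A.imp B))
    (hA : Deriv R Γ (A.neg.neg)) (hfin : Γ.Finite) : Deriv R Γ (B.neg.neg) := by
  apply Deriv.impI
  refine Deriv.mp (hA.mono (Set.subset_insert _ _) (hfin.insert _)) ?_
  apply Deriv.impI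
  refine Deriv.mp (Deriv.hyp (A := B.neg) (by simp) ((hfin.insert _).insert _)) ?_
  refine Deriv.mp (hAB.mono (by simp) ((hfin.insert _).insert _)) ?_
  exact Deriv.hyp (by simp) ((hfin.insert _).insert _)

lemma Deriv.transI_stable' (f : ℕ → ℕ) (A : Formula) (hA : A.IsClassical) :
    Deriv R ∅ (Formula.imp ((Formula.transI f A).neg.neg) (Formula.transI f A)) := by
  induction A with
  | var k n =>
      have hk : k = Kind.c := hA
      subst hk
      exact Deriv.tneg ((Formula.var Kind.i (f n)).neg)
  | bot =>
      show Deriv R ∅ ((Formula.bot.neg.neg).imp Formula.bot)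
      apply Deriv.impI
      refine Deriv.mp (Deriv.hyp (A := Formula.bot.neg.neg) (by simp) (Set.toFinite _)) ?_
      exact Deriv.impI (Deriv.hyp (by simp) (Set.toFinite _))
  | and B C ihB ihC =>
      obtain ⟨hB, hC⟩ := hA
      set B' := Formula.transI f B
      set C' := Formula.transI f C
      show Deriv R ∅ (((B'.and C').neg.neg).imp (B'.and C'))
      apply Deriv.impI
      have hfin : (insert ((B'.and C').neg.neg) (∅ : Set Formula)).Finite := Set.toFinite _
      have hdd : Deriv R (insert ((B'.and C').neg.neg) ∅) ((B'.and C').neg.neg) :=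
        Deriv.hyp (by simp) hfin
      have projB : Deriv R (∅ : Set Formula) ((B'.and C').imp B') :=
        Deriv.impI (Deriv.andE₁ (Deriv.hyp (A := B'.and C') (by simp) (Set.toFinite _)))
      have projC : Deriv R (∅ : Set Formula) ((B'.and C').imp C') :=
        Deriv.impI (Deriv.andE₂ (Deriv.hyp (A := B'.and C') (by simp) (Set.toFinite _)))
      refine Deriv.andI' ?_ ?_
      · exact Deriv.mp ((ihB hB).mono (by simp) hfin) (Deriv.dn_map projB hdd hfin)
      · exact Deriv.mp ((ihC hC).mono (by simp) hfin) (Deriv.dn_map projC hdd hfin)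
  | or B C ihB ihC =>
      exact Deriv.tneg (((Formula.transI f B).or (Formula.transI f C)).neg)
  | imp B C ihB ihC =>
      obtain ⟨hB, hC⟩ := hA
      set B' := Formula.transI f B
      set C' := Formula.transI f C
      show Deriv R ∅ (((B'.imp C').neg.neg).imp (B'.imp C'))
      apply Deriv.impI
      apply Deriv.impI
      set Γ : Set Formula := insert B' (insert ((B'.imp C').neg.neg) ∅) with hΓ
      have hfin : Γ.Finite := Set.toFinite _
      refine Deriv.mp ((ihC hC).mono (by simp) hfin) ?_
      apply Deriv.impI
      refine Deriv.mp (Deriv.hyp (A := (B'.imp C').neg.neg) (by simp [hΓ]) (hfin.insert _)) ?_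
      apply Deriv.impI
      have hfin2 : (insert (B'.imp C') (insert C'.neg Γ)).Finite := (hfin.insert _).insert _
      refine Deriv.mp (Deriv.hyp (A := C'.neg) (by simp) hfin2) ?_
      refine Deriv.mp (Deriv.hyp (A := B'.imp C') (by simp) hfin2) ?_
      exact Deriv.hyp (by simp [hΓ]) hfin2

end PML
/-- Double-negation stability of the intuitionistic translation: for a classical formula A,
⊢_(i) ¬¬A^i → A^i, where ^i sends each classical variable X_c to ¬¬ i(X_c) for an injection
i of the classical variables into the intuitionistic variables, and doubly negates ∨. -/
theorem PML.transI_stable (f : ℕ → ℕ) (hf : Function.Injective f)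
    (A : PML.Formula) (hA : A.IsClassical) :
    PML.DerivI ∅ (PML.Formula.imp ((PML.Formula.transI f A).neg.neg) (PML.Formula.transI f A)) := by
  exact PML.Deriv.transI_stable' f A hA
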